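/- Let G be a connected undirected multigraph and x a non-terminating chip-distribution on G. Then |x| ≥ |E(G)|. -/
import Mathlib


/- Common definitions for chip-firing on multigraphs/digraphs.

A digraph (without a fixed vertex enumeration) on a finite vertex type `V`
is given by its arc-multiplicity function `a : V → V → ℕ` (`a u v` = number
of arcs from `u` to `v`).  An undirected multigraph is the special case of a
symmetric multiplicity function `d` (`d u v` = number of edges between `u`
and `v`); then `outDeg d v = ∑ u, d v u` is the degree of `v`, and
`∑ v, ∑ u, d v u = 2 |E|`. -/

variable {V : Type*} [Fintype V] [DecidableEq V]

/-- Outdegree of `v` (= degree in the undirected, i.e. symmetric, case). -/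
def outDeg (a : V → V → ℕ) (v : V) : ℕ := ∑ u, a v u

/-- Indegree of `v`. -/
def inDeg (a : V → V → ℕ) (v : V) : ℕ := ∑ u, a u v

/-- The distribution obtained from `x` by firing the vertex `v`:
`v` loses `outDeg a v` chips and each `u` receives `a v u` chips. -/
def fire (a : V → V → ℕ) (x : V → ℕ) (v : V) : V → ℕ :=
  fun u => x u + a v u - (if u = v then outDeg a v else 0)

/-- The distribution obtained from `x` after firing the vertices in the list
`l`, in order. -/
def run (a : V → V → ℕ) (x : V → ℕ) : List V → (V → ℕ)
  | [] => x
  | v :: l => run a (fire a x v) l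

/-- The sequence of firings `l` starting from the distribution `x` is a legal
game: each fired vertex is active (has at least `outDeg` many chips) when it
is fired. -/
def LegalGame (a : V → V → ℕ) : (V → ℕ) → List V → Prop
  | _, [] => True
  | x, v :: l => outDeg a v ≤ x v ∧ LegalGame a (fire a x v) l

/-- `x` is non-terminating: after any legal game from `x` there is still an
active vertex, so every legal game can be continued indefinitely. -/
def Nonterminating (a : V → V → ℕ) (x : V → ℕ) : Prop :=
  ∀ l : List V, LegalGame a x l → ∃ v, outDeg a v ≤ run a x l v

/-- `x` is terminating: some legal game from `x` reaches a distribution with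
no active vertex. -/
def Terminates (a : V → V → ℕ) (x : V → ℕ) : Prop :=
  ∃ l : List V, LegalGame a x l ∧ ∀ v, run a x l v < outDeg a v

/-- No loops. -/
def Loopless (a : V → V → ℕ) : Prop := ∀ v, a v v = 0

/-- Connectivity of an undirected multigraph `d`. -/
def UConnected (d : V → V → ℕ) : Prop :=
  ∀ u v : V, Relation.ReflTransGen (fun p q => 0 < d p q) u v

/-- Weak connectivity of a digraph `a`. -/
def WConnected (a : V → V → ℕ) : Prop :=
  ∀ u v : V, Relation.ReflTransGen (fun p q => 0 < a p q ∨ 0 < a q p) u v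

/-- A digraph is acyclic if it has no directed cycle. -/
def AcyclicDigraph (a : V → V → ℕ) : Prop :=
  ∀ v : V, ¬ Relation.TransGen (fun p q => 0 < a p q) v v

/-- `a` is an orientation of the undirected multigraph `d`. -/
def IsOrientation (d a : V → V → ℕ) : Prop := ∀ u v, a u v + a v u = d u v

/-- A digraph is Eulerian if `d⁺(v) = d⁻(v)` for every vertex. -/
def EulerianD (a : V → V → ℕ) : Prop := ∀ v, outDeg a v = inDeg a v

/-- `f` is a feedback arc set of the digraph `a`: a subset of the arcs whose
removal leaves an acyclic digraph. -/
def IsFAS (a f : V → V → ℕ) : Prop :=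
  (∀ u v, f u v ≤ a u v) ∧ AcyclicDigraph (fun u v => a u v - f u v)

/-- Number of arcs in an arc set. -/
def arcSize (f : V → V → ℕ) : ℕ := ∑ u, ∑ v, f u v

/-- Degree of a divisor. -/
def divDeg (f : V → ℤ) : ℤ := ∑ v, f v

/-- Effective divisor. -/
def Effective (f : V → ℤ) : Prop := ∀ v, 0 ≤ f v

/-- Linear equivalence of divisors on the multigraph `d`: they differ by an
integer combination of the columns of the Laplacian. -/
def LinEquiv (d : V → V → ℕ) (f g : V → ℤ) : Prop :=
  ∃ z : V → ℤ, ∀ v, g v = f v + ∑ u, (d v u : ℤ) * (z u - z v)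

/-- `r` is the Baker–Norine rank of the divisor `f` on the multigraph `d`. -/
def IsRank (d : V → V → ℕ) (f : V → ℤ) (r : ℤ) : Prop :=
  IsLeast {m : ℤ | ∃ g : V → ℤ, Effective g ∧
    (¬ ∃ h : V → ℤ, Effective h ∧ LinEquiv d (fun v => f v - g v) h) ∧
    m = divDeg g - 1} r

section ChipAux
set_option linter.unusedSectionVars false

lemma run_append (a : V → V → ℕ) (x : V → ℕ) (l l' : List V) :
    run a x (l ++ l') = run a (run a x l) l' := by
  induction l generalizing x with
  | nil => simp [run]
  | cons v l ih => simp [run, ih]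

lemma legal_append {a : V → V → ℕ} {x : V → ℕ} {l l' : List V} :
    LegalGame a x (l ++ l') ↔ LegalGame a x l ∧ LegalGame a (run a x l) l' := by
  induction l generalizing x with
  | nil => simp [LegalGame, run]
  | cons v l ih => simp [LegalGame, run, ih, and_assoc]

lemma run_of_not_mem (a : V → V → ℕ) {y : V → ℕ} {l : List V} {v : V} (h : v ∉ l) :
    run a y l v = y v + (l.map (fun w => a w v)).sum := by
  induction l generalizing y with
  | nil => simp [run]
  | cons w l ih =>
    simp only [List.mem_cons, not_or] at h
    simp [run, ih h.2, fire, if_neg h.1, add_assoc]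

lemma sum_fire {a : V → V → ℕ} {x : V → ℕ} {v : V} (h : outDeg a v ≤ x v) :
    ∑ u, fire a x v u = ∑ u, x u := by
  have key : ∀ u, fire a x v u + (if u = v then outDeg a v else 0) = x u + a v u := by
    intro u
    by_cases hu : u = v
    · subst hu
      have h2 : outDeg a u ≤ x u + a u u := le_trans h (Nat.le_add_right _ _)
      simp [fire, Nat.sub_add_cancel h2]
    · simp [fire, hu]
  have h1 : (∑ u, fire a x v u) + (∑ u, (if u = v then outDeg a v else 0)) =
      ∑ u, (x u + a v u) := by
    rw [← Finset.sum_add_distrib]; exact Finset.sum_congr rfl fun u _ => key u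
  rw [Finset.sum_ite_eq' Finset.univ v, if_pos (Finset.mem_univ v),
    Finset.sum_add_distrib] at h1
  exact Nat.add_right_cancel h1

lemma sum_run {a : V → V → ℕ} {x : V → ℕ} {l : List V} (h : LegalGame a x l) :
    ∑ u, run a x l u = ∑ u, x u := by
  induction l generalizing x with
  | nil => simp [run]
  | cons v l ih =>
    obtain ⟨h1, h2⟩ := h
    simp [run, ih h2, sum_fire h1]

lemma run_le_sum {a : V → V → ℕ} {x : V → ℕ} {l : List V} (h : LegalGame a x l) (v : V) :
    run a x l v ≤ ∑ u, x u := by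
  rw [← sum_run h]
  exact Finset.single_le_sum (fun u _ => Nat.zero_le _) (Finset.mem_univ v)

lemma count_mul_le_map_sum (l : List V) (g : V → ℕ) (u : V) :
    l.count u * g u ≤ (l.map g).sum := by
  induction l with
  | nil => simp
  | cons w l ih =>
    rw [List.count_cons, List.map_cons, List.sum_cons, Nat.add_mul]
    have h := ih
    by_cases hw : w = u
    · simp only [hw, beq_self_eq_true, if_true]
      omega
    · simp only [beq_eq_false_iff_ne.2 hw, Bool.false_eq_true, if_false]
      omega

set_option linter.unusedSectionVars false

lemma toFinset_sum_le (l : List V) (g : V → ℕ) :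
    ∑ u ∈ l.toFinset, g u ≤ (l.map g).sum := by
  induction l with
  | nil => simp
  | cons w l ih =>
    rw [List.toFinset_cons, List.map_cons, List.sum_cons]
    by_cases hw : w ∈ l.toFinset
    · rw [Finset.insert_eq_self.2 hw]
      exact le_trans ih (Nat.le_add_left _ _)
    · rw [Finset.sum_insert hw]
      exact Nat.add_le_add (Nat.le_refl _) ih

noncomputable def chainP (a : V → V → ℕ) (x : V → ℕ) (hx : Nonterminating a x) :
    ℕ → {l : List V // LegalGame a x l} :=
  fun n => Nat.rec ⟨[], trivial⟩ (fun _ p =>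
    ⟨p.1 ++ [Classical.choose (hx p.1 p.2)], by
      rw [legal_append]
      exact ⟨p.2, Classical.choose_spec (hx p.1 p.2), trivial⟩⟩) n

noncomputable def nextV (a : V → V → ℕ) (x : V → ℕ) (hx : Nonterminating a x) (n : ℕ) : V :=
  Classical.choose (hx (chainP a x hx n).1 (chainP a x hx n).2)

lemma chainP_eq (a : V → V → ℕ) (x : V → ℕ) (hx : Nonterminating a x) (n : ℕ) :
    (chainP a x hx n).1 = (List.range n).map (nextV a x hx) := by
  induction n with
  | zero => rfl
  | succ n ih =>
    have : (chainP a x hx (n+1)).1 = (chainP a x hx n).1 ++ [nextV a x hx n] := rfl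
    rw [this, ih, List.range_succ, List.map_append, List.map_cons, List.map_nil]

lemma legal_prefix (a : V → V → ℕ) (x : V → ℕ) (hx : Nonterminating a x) (n : ℕ) :
    LegalGame a x ((List.range n).map (nextV a x hx)) := by
  rw [← chainP_eq]; exact (chainP a x hx n).2

lemma active_next (a : V → V → ℕ) (x : V → ℕ) (hx : Nonterminating a x) (n : ℕ) :
    outDeg a (nextV a x hx n) ≤
      run a x ((List.range n).map (nextV a x hx)) (nextV a x hx n) := by
  rw [← chainP_eq]
  exact Classical.choose_spec (hx (chainP a x hx n).1 (chainP a x hx n).2)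

lemma inf_often (d : V → V → ℕ) (hconn : UConnected d) (x : V → ℕ)
    (hx : Nonterminating d x) (v : V) (n : ℕ) :
    ∃ m, n ≤ m ∧ nextV d x hx m = v := by
  classical
  set s := nextV d x hx with hs
  have hbase : ∃ w : V, ∀ k, ∃ m, k ≤ m ∧ s m = w := by
    by_contra h
    push_neg at h
    choose f hf using h
    exact hf (s (Finset.univ.sup f)) (Finset.univ.sup f)
      (Finset.le_sup (Finset.mem_univ _)) rfl
  have hstep : ∀ w u : V, (∀ k, ∃ m, k ≤ m ∧ s m = w) → 0 < d w u →
      (∀ k, ∃ m, k ≤ m ∧ s m = u) := by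
    intro w u hw hdu
    by_contra hnu
    push_neg at hnu
    obtain ⟨k, hk⟩ := hnu
    set M : ℕ → List V := fun b => (List.range b).map (fun i => s (k + i)) with hM
    have hML : ∀ b, (List.range (k + b)).map s = (List.range k).map s ++ M b := by
      intro b
      rw [List.range_add, List.map_append, List.map_map]
      rfl
    have hMnot : ∀ b, u ∉ M b := by
      intro b hu
      rw [hM] at hu
      simp only [List.mem_map, List.mem_range] at hu
      obtain ⟨i, _, hi⟩ := hu
      exact hk (k + i) (Nat.le_add_right _ _) hi
    have hMsucc : ∀ b, M (b+1) = M b ++ [s (k+b)] := by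
      intro b
      rw [hM]
      simp [List.range_succ]
    have hmono : Monotone (fun b => (M b).count v) := by
      refine monotone_nat_of_le_succ ?_
      intro b
      rw [hMsucc, List.count_append]
      omega
    have hcount : ∀ K, ∃ b, K ≤ (M b).count w := by
      intro K
      induction K with
      | zero => exact ⟨0, Nat.zero_le _⟩
      | succ K ih =>
        obtain ⟨b, hb⟩ := ih
        obtain ⟨m, hm1, hm2⟩ := hw (k + b)
        refine ⟨m - k + 1, ?_⟩
        have hbk : b ≤ m - k := by omega
        have hsm : s (k + (m - k)) = w := by
          rw [show k + (m - k) = m by omega]; exact hm2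
        have hmo : Monotone (fun b => (M b).count w) := by
          refine monotone_nat_of_le_succ ?_
          intro c
          rw [hMsucc, List.count_append]
          omega
        have : (M (m - k + 1)).count w = (M (m - k)).count w + 1 := by
          rw [hMsucc, List.count_append, hsm]
          simp
        rw [this]
        exact Nat.succ_le_succ (le_trans hb (hmo hbk))
    obtain ⟨b, hb⟩ := hcount ((∑ u, x u) + 1)
    have hlegalk : LegalGame d x ((List.range (k+b)).map s) := legal_prefix d x hx (k+b)
    have hub : run d x ((List.range (k+b)).map s) u ≤ ∑ u, x u := run_le_sum hlegalk u
    have heq : run d x ((List.range (k+b)).map s) u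
        = run d x ((List.range k).map s) u + ((M b).map (fun z => d z u)).sum := by
      rw [hML, run_append, run_of_not_mem d (hMnot b)]
    have h2 : (M b).count w * d w u ≤ ((M b).map (fun z => d z u)).sum := by
      simpa using count_mul_le_map_sum (M b) (fun z => d z u) w
    have h3 : (∑ u, x u) + 1 ≤ (M b).count w * d w u :=
      le_trans (by omega) (Nat.mul_le_mul hb hdu)
    omega
  obtain ⟨w0, h0⟩ := hbase
  have hc := hconn w0 v
  have hall : ∀ k, ∃ m, k ≤ m ∧ s m = v := by
    clear hs
    induction hc with
    | refl => exact h0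
    | tail _ h ih => exact hstep _ _ ih h
  exact hall n


end ChipAux

/-- a non-terminating distribution on a connected multigraph has at
least `|E(G)|` chips, i.e. `2|x| ≥ 2|E| = ∑_v ∑_u d v u`. -/
theorem stmt5 {V : Type*} [Fintype V] [DecidableEq V]
    (d : V → V → ℕ) (hsym : ∀ u v, d u v = d v u) (hloop : Loopless d)
    (hconn : UConnected d) (x : V → ℕ) (hx : Nonterminating d x) :
    ∑ v, ∑ u, d v u ≤ 2 * ∑ v, x v := by
  classical
  set s := nextV d x hx with hs
  have hocc : ∀ v : V, ∃ m, s m = v := fun v =>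
    ((inf_often d hconn x hx v 0).imp (fun m h => h.2))
  choose m0 hm0 using hocc
  set n := Finset.univ.sup m0 with hn
  have hmn : ∀ v, m0 v ≤ n := fun v => Finset.le_sup (Finset.mem_univ v)
  set t : V → ℕ := fun v => Nat.findGreatest (fun k => s k = v) n with ht
  have ht_spec : ∀ v, s (t v) = v := fun v => Nat.findGreatest_spec (P := fun k => s k = v) (hmn v) (hm0 v)
  have ht_le : ∀ v, t v ≤ n := fun v => Nat.findGreatest_le (P := fun k => s k = v) n
  have ht_gt : ∀ v k, t v < k → k ≤ n → s k ≠ v := fun v k h1 h2 =>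
    Nat.findGreatest_is_greatest (P := fun k => s k = v) h1 h2
  have tinj : ∀ u v : V, t u = t v → u = v := by
    intro u v h
    rw [← ht_spec u, ← ht_spec v, h]
  have hlegal : LegalGame d x ((List.range (n+1)).map s) := legal_prefix d x hx (n+1)
  have key : ∀ v, (∑ u ∈ Finset.univ.filter (fun u => t v < t u), d u v)
      ≤ run d x ((List.range (n+1)).map s) v := by
    intro v
    set rest : List V := (List.range (n - t v)).map (fun i => s (t v + 1 + i)) with hrest
    have hdecomp : (List.range (n+1)).map s = (List.range (t v + 1)).map s ++ rest := by
      rw [show n + 1 = (t v + 1) + (n - t v) by have := ht_le v; omega,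
        List.range_add, List.map_append, List.map_map]
      rfl
    have hnotmem : v ∉ rest := by
      intro hv
      rw [hrest] at hv
      simp only [List.mem_map, List.mem_range] at hv
      obtain ⟨i, hi, hiv⟩ := hv
      exact ht_gt v (t v + 1 + i) (by omega) (by have := ht_le v; omega) hiv
    have h1 : run d x ((List.range (n+1)).map s) v
        = run d x ((List.range (t v + 1)).map s) v + (rest.map (fun w => d w v)).sum := by
      rw [hdecomp, run_append, run_of_not_mem d hnotmem]
    have h2 : ∑ u ∈ Finset.univ.filter (fun u => t v < t u), d u v
        ≤ (rest.map (fun w => d w v)).sum := by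
      refine le_trans (Finset.sum_le_sum_of_subset ?_) (toFinset_sum_le rest _)
      intro u hu
      simp only [Finset.mem_filter, Finset.mem_univ, true_and] at hu
      rw [List.mem_toFinset, hrest]
      simp only [List.mem_map, List.mem_range]
      refine ⟨t u - (t v + 1), by have := ht_le u; omega, ?_⟩
      rw [show t v + 1 + (t u - (t v + 1)) = t u by omega]
      exact ht_spec u
    omega
  have hsumS : ∑ v, ∑ u ∈ Finset.univ.filter (fun u => t v < t u), d u v ≤ ∑ v, x v := by
    calc ∑ v, ∑ u ∈ Finset.univ.filter (fun u => t v < t u), d u v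
        ≤ ∑ v, run d x ((List.range (n+1)).map s) v :=
          Finset.sum_le_sum (fun v _ => key v)
      _ = ∑ v, x v := sum_run hlegal
  have hsplit : ∀ v, ∑ u, d u v
      = (∑ u ∈ Finset.univ.filter (fun u => t v < t u), d u v)
      + (∑ u ∈ Finset.univ.filter (fun u => t u < t v), d u v) := by
    intro v
    rw [← Finset.sum_filter_add_sum_filter_not Finset.univ (fun u => t v < t u)
      (fun u => d u v)]
    congr 1
    have hins : Finset.univ.filter (fun u => ¬ t v < t u)
        = insert v (Finset.univ.filter (fun u => t u < t v)) := by
      ext u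
      simp only [Finset.mem_filter, Finset.mem_insert, Finset.mem_univ, true_and, not_lt]
      constructor
      · intro h
        rcases Nat.lt_or_ge (t u) (t v) with h' | h'
        · exact Or.inr h'
        · exact Or.inl (tinj u v (le_antisymm h h'))
      · rintro (rfl | h)
        · exact le_refl _
        · exact le_of_lt h
    rw [hins, Finset.sum_insert (by simp), hloop v, zero_add]
  have hswap : ∑ v, ∑ u ∈ Finset.univ.filter (fun u => t u < t v), d u v
      = ∑ v, ∑ u ∈ Finset.univ.filter (fun u => t v < t u), d u v := by
    rw [show (∑ v, ∑ u ∈ Finset.univ.filter (fun u => t u < t v), d u v)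
        = ∑ v, ∑ u, if t u < t v then d u v else 0 from
      Finset.sum_congr rfl fun v _ => Finset.sum_filter _ _]
    rw [Finset.sum_comm]
    refine Finset.sum_congr rfl fun v _ => ?_
    rw [Finset.sum_filter]
    refine Finset.sum_congr rfl fun u _ => ?_
    by_cases h : t v < t u <;> simp [h, hsym]
  have hid : ∑ v, ∑ u, d v u
      = 2 * ∑ v, ∑ u ∈ Finset.univ.filter (fun u => t v < t u), d u v := by
    calc ∑ v, ∑ u, d v u = ∑ v, ∑ u, d u v := Finset.sum_comm
      _ = ∑ v, ((∑ u ∈ Finset.univ.filter (fun u => t v < t u), d u v)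
            + (∑ u ∈ Finset.univ.filter (fun u => t u < t v), d u v)) :=
          Finset.sum_congr rfl fun v _ => hsplit v
      _ = (∑ v, ∑ u ∈ Finset.univ.filter (fun u => t v < t u), d u v)
            + (∑ v, ∑ u ∈ Finset.univ.filter (fun u => t u < t v), d u v) :=
          Finset.sum_add_distrib
      _ = 2 * ∑ v, ∑ u ∈ Finset.univ.filter (fun u => t v < t u), d u v := by
          rw [hswap]; ring
  rw [hid]
  exact Nat.mul_le_mul_left 2 hsumS
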